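/- arXiv:2305.04767 — 2 statements merged into one kernel-verified Lean document; each statement's English description precedes it below -/
import Mathlib

section
/- Let S be a colorful graph and let e* ∈ E(S) be any edge. Then there is no color-preserving homomorphism from S to the CFI graph Γ(S, χ_{e*}), i.e., hom(S, Γ(S, χ_{e*})) = 0. -/
open SimpleGraph

/-- Color-preserving homomorphism count between colored graphs. -/
noncomputable def cpHomCount {VH VG C : Type} (H : SimpleGraph VH) (cH : VH → C)
    (G : SimpleGraph VG) (cG : VG → C) : ℕ :=
  Nat.card {f : H →g G // ∀ v, cG (f v) = cH v}

variable {V : Type} [Fintype V] [DecidableEq V]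

/-- Vertices of the CFI graph over a colorful graph `S`: pairs of a color `v ∈ V(S)`
and an even assignment on the edges incident to `v` (encoded as a function on all of
`Sym2 V` supported on the incidence set of `v`). -/
def CFIVert (S : SimpleGraph V) : Type :=
  Σ v : V, {a : Sym2 V → ZMod 2 //
    (∀ e, a e ≠ 0 → e ∈ S.incidenceSet v) ∧ ∑ e : Sym2 V, a e = 0}

/-- The CFI graph of a colorful graph `S` with charge function `c`: vertices
`(u, a_u)` and `(v, a_v)` are adjacent iff `uv ∈ E(S)` and
`a_u(uv) + a_v(uv) = c(uv)`.  Its coloring is `Sigma.fst : CFIVert S → V`. -/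
def CFI (S : SimpleGraph V) (c : Sym2 V → ZMod 2) : SimpleGraph (CFIVert S) where
  Adj x y := S.Adj x.1 y.1 ∧ x.2.1 s(x.1, y.1) + y.2.1 s(x.1, y.1) = c s(x.1, y.1)
  symm := ⟨by
    rintro ⟨u, a⟩ ⟨v, b⟩ ⟨hadj, hsum⟩
    refine ⟨hadj.symm, ?_⟩
    simp only [Sym2.eq_swap (a := v) (b := u)]
    rw [add_comm]; exact hsum⟩
  loopless := ⟨fun x h => S.irrefl h.1⟩

/-- For a colorful graph `S` and any edge `e* ∈ E(S)`, there is no color-preserving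
homomorphism from `S` into the CFI graph `Γ(S, χ_{e*})` with unit charge on `e*`:
`hom(S, Γ(S, χ_{e*})) = 0`. -/
theorem cpHomCount_CFI_single_charge_eq_zero
    (S : SimpleGraph V) [DecidableRel S.Adj]
    (estar : Sym2 V) (he : estar ∈ S.edgeSet) :
    cpHomCount S id (CFI S (fun e => if e = estar then 1 else 0)) Sigma.fst = 0 := by
  set c : Sym2 V → ZMod 2 := fun e => if e = estar then 1 else 0 with hc
  unfold cpHomCount; rw [Nat.card_eq_zero]
  left
  constructor
  rintro ⟨f, hf⟩
  simp only [id] at hf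
  set a : V → Sym2 V → ZMod 2 := fun v => (f v).2.1 with ha
  have hsupp : ∀ v e, a v e ≠ 0 → e ∈ S.incidenceSet v := by
    intro v e h
    have := (f v).2.2.1 e h
    rwa [hf v] at this
  have h0 : ∀ v, ∑ e : Sym2 V, a v e = 0 := fun v => (f v).2.2.2
  have hE : ∀ u v, S.Adj u v → a u s(u, v) + a v s(u, v) = c s(u, v) := by
    intro u v huv
    have h2 := f.map_rel huv
    obtain ⟨-, h3⟩ := h2
    have h4 : s((f u).fst, (f v).fst) = s(u, v) := by rw [hf u, hf v]
    rw [h4] at h3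
    exact h3
  have hinner : ∀ e : Sym2 V, ∑ v : V, a v e = if e ∈ S.edgeSet then c e else 0 := by
    intro e
    by_cases hmem : e ∈ S.edgeSet
    · rw [if_pos hmem]
      induction e using Sym2.ind with
      | _ u v =>
        have huv : S.Adj u v := hmem
        have hne : u ≠ v := huv.ne
        rw [← hE u v huv]
        have hp : a u s(u, v) + a v s(u, v) = ∑ w ∈ ({u, v} : Finset V), a w s(u, v) :=
          (Finset.sum_pair (f := fun w => a w s(u, v)) hne).symm
        rw [hp]
        symm
        apply Finset.sum_subset (Finset.subset_univ _)
        intro w _ hw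
        by_contra h
        have hinc := hsupp w _ h
        have hwm : w ∈ s(u, v) := hinc.2
        simp only [Finset.mem_insert, Finset.mem_singleton] at hw
        rw [Sym2.mem_iff] at hwm
        tauto
    · rw [if_neg hmem]
      apply Finset.sum_eq_zero
      intro v _
      by_contra h
      exact hmem (hsupp v _ h).1
  have key : (0 : ZMod 2) = 1 := by
    calc (0 : ZMod 2) = ∑ v : V, ∑ e : Sym2 V, a v e := by simp [h0]
      _ = ∑ e : Sym2 V, ∑ v : V, a v e := Finset.sum_comm
      _ = ∑ e : Sym2 V, (if e ∈ S.edgeSet then c e else 0) :=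
          Finset.sum_congr rfl fun e _ => hinner e
      _ = ∑ e : Sym2 V, (if e = estar then 1 else 0) := by
          refine Finset.sum_congr rfl fun e _ => ?_
          by_cases h : e = estar
          · subst h; rw [if_pos he, if_pos rfl, hc]; simp
          · rw [if_neg h, hc]; simp [h]
      _ = 1 := by rw [Finset.sum_ite_eq' Finset.univ estar (fun _ => (1 : ZMod 2))]; simp
  exact absurd key (by decide)
end

section
/- Let S be a connected colorful graph, let e* ∈ E(S), and let S' be a proper edge-subgraph of S, i.e., a colorful graph with vertex set V(S) and edge set E(S') ⊊ E(S). For a charge function c, let Γ(S,c) ⊗ S' denote the colored graph obtained from the CFI graph Γ(S,c) by deleting every edge between vertices (u, a_u) and (v, a_v) whose color pair uv is not an edge of S'. Then there is a color-preserving isomorphism between Γ(S, χ_{e*}) ⊗ S' and Γ(S, χ_∅) ⊗ S'. -/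
open SimpleGraph

variable {V : Type} [Fintype V] [DecidableEq V]

/-- The restriction `Γ(S,c) ⊗ S'` of the CFI graph to the edge-colors of a
subgraph `S'`: edges of `Γ(S,c)` whose color pair is not an edge of `S'` are
deleted. -/
def CFIRestrict (S : SimpleGraph V) (c : Sym2 V → ZMod 2) (S' : SimpleGraph V) :
    SimpleGraph (CFIVert S) where
  Adj x y := (CFI S c).Adj x y ∧ S'.Adj x.1 y.1
  symm := ⟨fun _ _ h => ⟨h.1.symm, h.2.symm⟩⟩
  loopless := ⟨fun x h => (CFI S c).irrefl h.1⟩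

private def chi (e : Sym2 V) : Sym2 V → ZMod 2 := fun g => if g = e then 1 else 0

private def Good (S : SimpleGraph V) (e1 e2 : Sym2 V) (t : V → Sym2 V → ZMod 2) : Prop :=
  (∀ v e, t v e ≠ 0 → e ∈ S.incidenceSet v) ∧
  (∀ v, ∑ e : Sym2 V, t v e = 0) ∧
  (∀ u v : V, u ≠ v → t u s(u, v) + t v s(u, v) = chi e1 s(u, v) + chi e2 s(u, v))

private def bump (y : V) (e1 e2 : Sym2 V) : V → Sym2 V → ZMod 2 :=
  fun v g => if v = y then chi e1 g + chi e2 g else 0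

private lemma bump_good {S : SimpleGraph V} {y : V} {e1 e2 : Sym2 V}
    (hy1 : y ∈ e1) (hy2 : y ∈ e2) (h1 : e1 ∈ S.edgeSet) (h2 : e2 ∈ S.edgeSet) :
    Good S e1 e2 (bump y e1 e2) := by
  refine ⟨?_, ?_, ?_⟩
  · intro v g h
    unfold bump chi at h
    by_cases hv : v = y
    · subst hv
      rw [if_pos rfl] at h
      by_cases hg1 : g = e1
      · subst hg1; exact ⟨h1, hy1⟩
      · by_cases hg2 : g = e2
        · subst hg2; exact ⟨h2, hy2⟩
        · rw [if_neg hg1, if_neg hg2] at h; simp at h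
    · rw [if_neg hv] at h; simp at h
  · intro v
    unfold bump chi
    by_cases hv : v = y
    · simp only [if_pos hv, Finset.sum_add_distrib, Finset.sum_ite_eq' Finset.univ,
        Finset.mem_univ, if_pos]
      decide
    · simp [if_neg hv]
  · intro u v huv
    unfold bump
    by_cases hu : u = y
    · have hv : ¬ v = y := fun h => huv (hu.trans h.symm)
      rw [if_pos hu, if_neg hv, add_zero]
    · by_cases hv : v = y
      · rw [if_neg hu, if_pos hv, zero_add]
      · rw [if_neg hu, if_neg hv, add_zero]
        have g1 : chi e1 s(u, v) = 0 := by
          unfold chi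
          rw [if_neg]
          intro hg
          rcases Sym2.mem_iff.1 (show y ∈ s(u, v) by rw [hg]; exact hy1) with h | h
          · exact hu h.symm
          · exact hv h.symm
        have g2 : chi e2 s(u, v) = 0 := by
          unfold chi
          rw [if_neg]
          intro hg
          rcases Sym2.mem_iff.1 (show y ∈ s(u, v) by rw [hg]; exact hy2) with h | h
          · exact hu h.symm
          · exact hv h.symm
        rw [g1, g2, add_zero]

private lemma good_trans {S : SimpleGraph V} {e1 e2 e3 : Sym2 V}
    {t t' : V → Sym2 V → ZMod 2} (h : Good S e1 e2 t) (h' : Good S e2 e3 t') :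
    Good S e1 e3 (fun v g => t v g + t' v g) := by
  obtain ⟨hA, hB, hC⟩ := h
  obtain ⟨hA', hB', hC'⟩ := h'
  refine ⟨?_, ?_, ?_⟩
  · intro v g hg
    show g ∈ S.incidenceSet v
    by_cases h1 : t v g = 0
    · by_cases h2 : t' v g = 0
      · exact absurd (show t v g + t' v g = 0 by rw [h1, h2, add_zero]) hg
      · exact hA' v g h2
    · exact hA v g h1
  · intro v
    rw [Finset.sum_add_distrib, hB v, hB' v, add_zero]
  · intro u v huv
    have key : ∀ a b c d x y z : ZMod 2, a + b = x + y → c + d = y + z →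
        (a + c) + (b + d) = x + z := by decide
    exact key _ _ _ _ _ _ _ (hC u v huv) (hC' u v huv)

private lemma walk_good (S : SimpleGraph V) {y p : V} (w : S.Walk y p) :
    ∀ e1 : Sym2 V, y ∈ e1 → e1 ∈ S.edgeSet →
    ∀ e2 : Sym2 V, p ∈ e2 → e2 ∈ S.edgeSet →
    ∃ t, Good S e1 e2 t := by
  induction w with
  | nil =>
    intro e1 hy h1 e2 hp h2
    exact ⟨_, bump_good hy hp h1 h2⟩
  | @cons y z p h w ih =>
    intro e1 hy h1 e2 hp h2
    obtain ⟨t', ht'⟩ := ih s(y, z) (Sym2.mem_mk_right y z) (S.mem_edgeSet.2 h) e2 hp h2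
    exact ⟨_, good_trans (bump_good hy (Sym2.mem_mk_left y z) h1 (S.mem_edgeSet.2 h)) ht'⟩

/-- For a connected colorful graph `S`, an edge `e* ∈ E(S)` and a proper
edge-subgraph `S' < S`, the restrictions `Γ(S, χ_{e*}) ⊗ S'` and `Γ(S, χ_∅) ⊗ S'`
are color-isomorphic, via an isomorphism preserving the coloring `Sigma.fst`. -/
theorem CFI_restrict_iso
    (S : SimpleGraph V) [DecidableRel S.Adj] (hconn : S.Connected)
    (estar : Sym2 V) (he : estar ∈ S.edgeSet)
    (S' : SimpleGraph V) (hS' : S' < S) :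
    ∃ φ : CFIRestrict S (fun e => if e = estar then 1 else 0) S' ≃g
        CFIRestrict S (fun _ => 0) S',
      ∀ x : CFIVert S, (φ x).1 = x.1 := by
  obtain ⟨f, hf, hf'⟩ := Set.exists_of_ssubset ((SimpleGraph.edgeSet_ssubset_edgeSet).2 hS')
  induction f using Sym2.ind with
  | _ p q =>
  induction estar using Sym2.ind with
  | _ x y =>
  obtain ⟨w⟩ : S.Reachable y p := hconn.preconnected y p
  obtain ⟨t, htA, htB, htC⟩ := walk_good S w s(x, y) (Sym2.mem_mk_right x y) he
    s(p, q) (Sym2.mem_mk_left p q) hf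
  have hFval : ∀ a : CFIVert S,
      (∀ e, (a.2.1 e + t a.1 e) ≠ 0 → e ∈ S.incidenceSet a.1) ∧
      ∑ e : Sym2 V, (a.2.1 e + t a.1 e) = 0 := by
    intro a
    constructor
    · intro e hne
      by_cases h1 : a.2.1 e = 0
      · by_cases h2 : t a.1 e = 0
        · exact absurd (by rw [h1, h2, add_zero]) hne
        · exact htA a.1 e h2
      · exact a.2.2.1 e h1
    · rw [Finset.sum_add_distrib, a.2.2.2, htB a.1, add_zero]
  let F : CFIVert S → CFIVert S := fun a => ⟨a.1, ⟨fun e => a.2.1 e + t a.1 e, hFval a⟩⟩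
  have hFF : ∀ a, F (F a) = a := by
    rintro ⟨v, a, ha⟩
    simp only [F]
    congr 1
    ext e
    show a e + t v e + t v e = a e
    rw [add_assoc, CharTwo.add_self_eq_zero, add_zero]
  have key : ∀ A B T1 T2 C : ZMod 2, T1 + T2 = C → ((A + T1) + (B + T2) = 0 ↔ A + B = C) := by
    decide
  have hts : ∀ a b : CFIVert S, S'.Adj a.1 b.1 →
      t a.1 s(a.1, b.1) + t b.1 s(a.1, b.1) = (if s(a.1, b.1) = s(x, y) then 1 else 0) := by
    intro a b hadj
    rw [htC a.1 b.1 hadj.ne]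
    have : chi s(p, q) s(a.1, b.1) = 0 := by
      unfold chi
      rw [if_neg]
      intro hg
      exact hf' (hg ▸ (S'.mem_edgeSet.2 hadj))
    rw [this, add_zero]
    rfl
  refine ⟨⟨⟨F, F, hFF, hFF⟩, ?_⟩, fun a => rfl⟩
  intro a b
  show ((S.Adj a.1 b.1 ∧ (a.2.1 s(a.1, b.1) + t a.1 s(a.1, b.1)) +
      (b.2.1 s(a.1, b.1) + t b.1 s(a.1, b.1)) = 0) ∧ S'.Adj a.1 b.1) ↔
    ((S.Adj a.1 b.1 ∧ a.2.1 s(a.1, b.1) + b.2.1 s(a.1, b.1) =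
      (if s(a.1, b.1) = s(x, y) then 1 else 0)) ∧ S'.Adj a.1 b.1)
  constructor
  · rintro ⟨⟨hSadj, hsum⟩, hS'adj⟩
    exact ⟨⟨hSadj, ((key _ _ _ _ _ (hts a b hS'adj)).1 hsum)⟩, hS'adj⟩
  · rintro ⟨⟨hSadj, hsum⟩, hS'adj⟩
    exact ⟨⟨hSadj, ((key _ _ _ _ _ (hts a b hS'adj)).2 hsum)⟩, hS'adj⟩
end
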